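/- Let g be a finite-dimensional Lie algebra over a field k whose Killing form is nondegenerate (perfect). Then every derivation of g is inner: for each D : g → g with D([a,b]) = [D(a),b] + [a,D(b)] there exists z ∈ g with D = ad(z). -/

import Mathlib

/-- Let `g` be a finite-dimensional Lie algebra over a field `k` whose Killing
form is nondegenerate (perfect).  Then every derivation of `g` is inner: for each linear map
`D : g → g` satisfying the Leibniz rule `D ⁅a,b⁆ = ⁅D a, b⁆ + ⁅a, D b⁆` there is `z ∈ g`
with `D = ad z`. -/
theorem stmt_11 (k : Type*) [Field k]
    (g : Type*) [LieRing g] [LieAlgebra k g] [FiniteDimensional k g]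
    (hnd : (killingForm k g).Nondegenerate)
    (D : g →ₗ[k] g)
    (hD : ∀ a b : g, D ⁅a, b⁆ = ⁅D a, b⁆ + ⁅a, D b⁆) :
    ∃ z : g, ∀ b : g, D b = ⁅z, b⁆ := by
  have : LieAlgebra.IsKilling k g := by
    constructor
    have h := LinearMap.BilinForm.nondegenerate_iff_ker_eq_bot.mp hnd
    rw [← LieIdeal.coe_killingCompl_top] at h
    exact (LieSubmodule.toSubmodule_inj (N := _) (N' := _)).mp (by simpa using h)
  let D' : LieDerivation k g g := ⟨D, fun a b => by rw [hD, ← lie_skew b (D a)]; module⟩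
  obtain ⟨z, hz⟩ := LieDerivation.IsKilling.exists_eq_ad D'
  refine ⟨z, fun b => ?_⟩
  have := congrArg (fun f : LieDerivation k g g => f b) hz
  simpa [D'] using this.symm
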